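/- Fix β real with 0 < |β| < 1, γ = (1−β²)^{−1/2}, and x₁, x₂ ∈ ℝ. Let R(x; β, x₁, x₂) = 4·arctan(β sinh(γ(x+x₂))/cosh(γ x₁)) and Rₜ(x; β, x₁, x₂) = −4β²γ sinh(γ(x+x₂)) sinh(γ x₁)/(cosh²(γ x₁) + β² sinh²(γ(x+x₂))), and write R′ = ∂ₓR, R_{t,1} = ∂_{x₁}Rₜ, R_{t,2} = ∂_{x₂}Rₜ. Then: (a) when x₂ = 0, the functions x ↦ Rₜ(x) and x ↦ R_{t,1}(x) are odd, and the functions x ↦ R′(x) and x ↦ R_{t,2}(x) are even; (b) for all x₁, x₂ ∈ ℝ, the products Rₜ·R′ and R_{t,1}·R_{t,2} are integrable over ℝ and ∫_ℝ Rₜ(x) R′(x) dx = 0 and ∫_ℝ R_{t,1}(x) R_{t,2}(x) dx = 0. -/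

import Mathlib

open MeasureTheory

/-! ### Auxiliary derivative computations -/

lemma aux_dR (β γ c x₂ : ℝ) (hc : 0 < c) (x : ℝ) :
    HasDerivAt (fun y => 4 * Real.arctan (β * Real.sinh (γ * (y + x₂)) / c))
      (4 * β * γ * Real.cosh (γ * (x + x₂)) * c
        / (c ^ 2 + β ^ 2 * Real.sinh (γ * (x + x₂)) ^ 2)) x := by
  have hl : HasDerivAt (fun y : ℝ => γ * (y + x₂)) γ x := by
    simpa using ((hasDerivAt_id x).add_const x₂).const_mul γ
  have hu : HasDerivAt (fun y => β * Real.sinh (γ * (y + x₂)) / c)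
      (β * (Real.cosh (γ * (x + x₂)) * γ) / c) x :=
    ((hl.sinh).const_mul β).div_const c
  have h := ((Real.hasDerivAt_arctan (β * Real.sinh (γ * (x + x₂)) / c)).comp x hu).const_mul 4
  refine h.congr_deriv ?_
  have hD : c ^ 2 + β ^ 2 * Real.sinh (γ * (x + x₂)) ^ 2 ≠ 0 := by positivity
  have h1 : (1 : ℝ) + (β * Real.sinh (γ * (x + x₂)) / c) ^ 2 ≠ 0 := by positivity
  field_simp

lemma aux_d1 (A b γ : ℝ) (hb : 0 ≤ b) (t : ℝ) :
    HasDerivAt (fun y => A * Real.sinh (γ * y) / (Real.cosh (γ * y) ^ 2 + b))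
      ((A * (Real.cosh (γ * t) * γ) * (Real.cosh (γ * t) ^ 2 + b)
        - A * Real.sinh (γ * t) * (2 * Real.cosh (γ * t) * (Real.sinh (γ * t) * γ)))
        / (Real.cosh (γ * t) ^ 2 + b) ^ 2) t := by
  have hl : HasDerivAt (fun y : ℝ => γ * y) γ t := by
    simpa using (hasDerivAt_id t).const_mul γ
  have hnum : HasDerivAt (fun y => A * Real.sinh (γ * y)) (A * (Real.cosh (γ * t) * γ)) t :=
    hl.sinh.const_mul A
  have hden : HasDerivAt (fun y => Real.cosh (γ * y) ^ 2 + b)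
      (2 * Real.cosh (γ * t) * (Real.sinh (γ * t) * γ)) t := by
    have h := (hl.cosh.pow 2).add_const b
    refine h.congr_deriv ?_
    simp
  have hc := Real.cosh_pos (x := γ * t)
  have hne : Real.cosh (γ * t) ^ 2 + b ≠ 0 := by positivity
  exact hnum.div hden hne

lemma aux_d2 (A B c2 b2 γ x : ℝ) (hc : 0 < c2) (hb : 0 ≤ b2) (t : ℝ) :
    HasDerivAt
      (fun y => A * Real.sinh (γ * (x + y)) * B / (c2 + b2 * Real.sinh (γ * (x + y)) ^ 2))
      ((A * (Real.cosh (γ * (x + t)) * γ) * B * (c2 + b2 * Real.sinh (γ * (x + t)) ^ 2)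
        - A * Real.sinh (γ * (x + t)) * B
            * (b2 * (2 * Real.sinh (γ * (x + t)) * (Real.cosh (γ * (x + t)) * γ))))
        / (c2 + b2 * Real.sinh (γ * (x + t)) ^ 2) ^ 2) t := by
  have hl : HasDerivAt (fun y : ℝ => γ * (x + y)) γ t := by
    simpa using ((hasDerivAt_id t).const_add x).const_mul γ
  have hnum : HasDerivAt (fun y => A * Real.sinh (γ * (x + y)) * B)
      (A * (Real.cosh (γ * (x + t)) * γ) * B) t :=
    (hl.sinh.const_mul A).mul_const B
  have hden : HasDerivAt (fun y => c2 + b2 * Real.sinh (γ * (x + y)) ^ 2)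
      (b2 * (2 * Real.sinh (γ * (x + t)) * (Real.cosh (γ * (x + t)) * γ))) t := by
    have h := ((hl.sinh.pow 2).const_mul b2).const_add c2
    refine h.congr_deriv ?_
    simp
  have hne : c2 + b2 * Real.sinh (γ * (x + t)) ^ 2 ≠ 0 := by positivity
  exact hnum.div hden hne

/-! ### The explicit profiles -/

noncomputable def F1 (β γ x₁ x₂ x : ℝ) : ℝ :=
  -4 * β ^ 2 * γ * Real.sinh (γ * (x + x₂)) * Real.sinh (γ * x₁)
      / (Real.cosh (γ * x₁) ^ 2 + β ^ 2 * Real.sinh (γ * (x + x₂)) ^ 2)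
  * (4 * β * γ * Real.cosh (γ * (x + x₂)) * Real.cosh (γ * x₁)
      / (Real.cosh (γ * x₁) ^ 2 + β ^ 2 * Real.sinh (γ * (x + x₂)) ^ 2))

noncomputable def G1 (β γ x₁ x₂ x : ℝ) : ℝ :=
  (-4 * β ^ 2 * γ * Real.sinh (γ * (x + x₂)) * (Real.cosh (γ * x₁) * γ)
      * (Real.cosh (γ * x₁) ^ 2 + β ^ 2 * Real.sinh (γ * (x + x₂)) ^ 2)
    - -4 * β ^ 2 * γ * Real.sinh (γ * (x + x₂)) * Real.sinh (γ * x₁)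
      * (2 * Real.cosh (γ * x₁) * (Real.sinh (γ * x₁) * γ)))
  / (Real.cosh (γ * x₁) ^ 2 + β ^ 2 * Real.sinh (γ * (x + x₂)) ^ 2) ^ 2

noncomputable def G2 (β γ x₁ x₂ x : ℝ) : ℝ :=
  (-4 * β ^ 2 * γ * (Real.cosh (γ * (x + x₂)) * γ) * Real.sinh (γ * x₁)
      * (Real.cosh (γ * x₁) ^ 2 + β ^ 2 * Real.sinh (γ * (x + x₂)) ^ 2)
    - -4 * β ^ 2 * γ * Real.sinh (γ * (x + x₂)) * Real.sinh (γ * x₁)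
      * (β ^ 2 * (2 * Real.sinh (γ * (x + x₂)) * (Real.cosh (γ * (x + x₂)) * γ))))
  / (Real.cosh (γ * x₁) ^ 2 + β ^ 2 * Real.sinh (γ * (x + x₂)) ^ 2) ^ 2

/-! ### Integrable majorant -/

lemma integrable_exp_neg_mul_abs (b : ℝ) (hb : 0 < b) :
    Integrable (fun x : ℝ => Real.exp (-(b * |x|))) := by
  have h1 : IntegrableOn (fun x : ℝ => Real.exp (-(b * |x|))) (Set.Ici 0) := by
    rw [integrableOn_Ici_iff_integrableOn_Ioi]
    exact (exp_neg_integrableOn_Ioi 0 hb).congr_fun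
      (fun x hx => by rw [abs_of_pos hx]; ring_nf) measurableSet_Ioi
  have h2 : IntegrableOn (fun x : ℝ => Real.exp (-(b * |x|))) (Set.Iic 0) := by
    have hmp : MeasurePreserving (fun x : ℝ => -x) volume volume :=
      Measure.measurePreserving_neg volume
    have hemb : MeasurableEmbedding (fun x : ℝ => -x) :=
      (Homeomorph.neg ℝ).measurableEmbedding
    have h := (hmp.integrableOn_comp_preimage hemb
      (f := fun x : ℝ => Real.exp (-(b * |x|))) (s := Set.Ici 0)).2 h1
    have heq : ((fun x : ℝ => Real.exp (-(b * |x|))) ∘ fun x : ℝ => -x)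
        = fun x : ℝ => Real.exp (-(b * |x|)) := by
      funext x; simp [Function.comp, abs_neg]
    have hset : (fun x : ℝ => -x) ⁻¹' Set.Ici 0 = Set.Iic 0 := by
      ext x; simp
    rwa [heq, hset] at h
  rw [← integrableOn_univ, ← Set.Iic_union_Ici (a := (0:ℝ))]
  exact h2.union h1

lemma exp_abs_le_two_cosh (t : ℝ) : Real.exp |t| ≤ 2 * Real.cosh t := by
  rw [Real.cosh_eq]
  rcases abs_cases t with ⟨h, _⟩ | ⟨h, _⟩ <;> rw [h] <;>
    [nlinarith [Real.exp_pos (-t)]; nlinarith [Real.exp_pos t]]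

/-! ### Pointwise bounds -/

lemma F1_bound (β γ x₁ x₂ : ℝ) (hβ1 : |β| < 1) (hγ : 0 < γ) (x : ℝ) :
    |F1 β γ x₁ x₂ x| ≤ 16 * γ ^ 2 * |Real.sinh (γ * x₁)| * Real.exp (-(γ * |x + x₂|)) := by
  unfold F1
  set s := Real.sinh (γ * (x + x₂)) with hs
  set C := Real.cosh (γ * (x + x₂)) with hC
  set c := Real.cosh (γ * x₁) with hc
  set s₁ := Real.sinh (γ * x₁) with hs₁
  set E := Real.exp (-(γ * |x + x₂|)) with hE
  have hcpos : 0 < c := by rw [hc]; exact Real.cosh_pos _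
  have hc1 : 1 ≤ c := by rw [hc]; exact Real.one_le_cosh _
  have hC1 : 1 ≤ C := by rw [hC]; exact Real.one_le_cosh _
  have hCpos : 0 < C := lt_of_lt_of_le one_pos hC1
  have hEpos : 0 < E := by rw [hE]; exact Real.exp_pos _
  have hsq : C ^ 2 = s ^ 2 + 1 := by rw [hC, hs]; exact Real.cosh_sq _
  set D := c ^ 2 + β ^ 2 * s ^ 2 with hD
  have hDpos : 0 < D := by rw [hD]; positivity
  have hbs : (|β| * |s|) ^ 2 = β ^ 2 * s ^ 2 := by rw [mul_pow, sq_abs, sq_abs]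
  have h1 : 2 * |β| * |s| * c ≤ D := by
    rw [hD]; nlinarith [sq_nonneg (c - |β| * |s|), hbs]
  have h2 : |β| ^ 2 * C ^ 2 ≤ D := by
    rw [hD, sq_abs]; nlinarith [hsq, hc1, hβ1, abs_nonneg β, sq_abs β]
  have hE1 : 1 ≤ 2 * C * E := by
    have hh : Real.exp (γ * |x + x₂|) ≤ 2 * C := by
      have h := exp_abs_le_two_cosh (γ * (x + x₂))
      rwa [abs_mul, abs_of_pos hγ, ← hC] at h
    have h := mul_le_mul_of_nonneg_right hh hEpos.le
    have h0 : γ * |x + x₂| + -(γ * |x + x₂|) = 0 := by ring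
    rwa [hE, ← Real.exp_add, h0, Real.exp_zero] at h
  clear_value s C c s₁ E D
  rw [div_mul_div_comm, abs_div, abs_of_pos (by positivity : (0:ℝ) < D * D),
    div_le_iff₀ (by positivity : (0:ℝ) < D * D)]
  have habs : |(-4 * β ^ 2 * γ * s * s₁) * (4 * β * γ * C * c)|
      = 16 * |β| ^ 3 * γ ^ 2 * |s| * |s₁| * C * c := by
    rw [show (-4 * β ^ 2 * γ * s * s₁) * (4 * β * γ * C * c)
        = (-16) * β ^ 3 * γ ^ 2 * s * s₁ * C * c by ring]
    rw [abs_mul, abs_mul, abs_mul, abs_mul, abs_mul, abs_mul, abs_pow, abs_pow,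
      abs_of_pos hγ, abs_of_pos hCpos, abs_of_pos hcpos]
    norm_num
  rw [habs]
  have hq1 : (2 * |β| * |s| * c) * (|β| ^ 2 * C ^ 2) ≤ D * D :=
    mul_le_mul h1 h2 (by positivity) hDpos.le
  have hq2 := mul_le_mul_of_nonneg_left hq1
    (by positivity : (0:ℝ) ≤ 16 * γ ^ 2 * |s₁| * E)
  have hq3 := mul_le_mul_of_nonneg_left hE1
    (by positivity : (0:ℝ) ≤ 16 * γ ^ 2 * |s₁| * |β| ^ 3 * |s| * c * C)
  linarith [hq2, hq3]

lemma G1_bound (β γ x₁ x₂ : ℝ) (hβ1 : |β| < 1) (hγ : 0 < γ) (x : ℝ) :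
    |G1 β γ x₁ x₂ x| ≤ 2 * |β| * γ ^ 2 * (1 + 2 * Real.sinh (γ * x₁) ^ 2) := by
  unfold G1
  set s := Real.sinh (γ * (x + x₂)) with hs
  set c := Real.cosh (γ * x₁) with hc
  set s₁ := Real.sinh (γ * x₁) with hs₁
  have hcpos : 0 < c := by rw [hc]; exact Real.cosh_pos _
  have hc1 : 1 ≤ c := by rw [hc]; exact Real.one_le_cosh _
  set D := c ^ 2 + β ^ 2 * s ^ 2 with hD
  have hDpos : 0 < D := by rw [hD]; positivity
  have hD1 : 1 ≤ D := by rw [hD]; nlinarith [hc1, sq_nonneg (β * s)]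
  have hbs : (|β| * |s|) ^ 2 = β ^ 2 * s ^ 2 := by rw [mul_pow, sq_abs, sq_abs]
  have h1 : 2 * |β| * |s| * c ≤ D := by
    rw [hD]; nlinarith [sq_nonneg (c - |β| * |s|), hbs]
  clear_value s c s₁ D
  have hNeq : -4 * β ^ 2 * γ * s * (c * γ) * D - -4 * β ^ 2 * γ * s * s₁
      * (2 * c * (s₁ * γ)) = (-4 * β ^ 2 * γ ^ 2 * c * s) * (D - 2 * s₁ ^ 2) := by ring
  rw [abs_div, abs_of_pos (by positivity : (0:ℝ) < D ^ 2),
    div_le_iff₀ (by positivity : (0:ℝ) < D ^ 2), hNeq, abs_mul]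
  have habs : |(-4 * β ^ 2 * γ ^ 2 * c * s)| = 4 * |β| ^ 2 * γ ^ 2 * c * |s| := by
    rw [show -4 * β ^ 2 * γ ^ 2 * c * s = (-4) * β ^ 2 * γ ^ 2 * c * s by ring,
      abs_mul, abs_mul, abs_mul, abs_mul, abs_pow, abs_pow, abs_of_pos hγ, abs_of_pos hcpos]
    norm_num
  rw [habs]
  have h5 : |D - 2 * s₁ ^ 2| ≤ (1 + 2 * s₁ ^ 2) * D := by
    rw [abs_le]
    constructor <;> nlinarith [hDpos, sq_nonneg s₁, hD1]
  have hq := mul_le_mul h1 h5 (abs_nonneg _) hDpos.le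
  have hq2 := mul_le_mul_of_nonneg_left hq (by positivity : (0:ℝ) ≤ 2 * |β| * γ ^ 2)
  linarith [hq2]

lemma G2_bound (β γ x₁ x₂ : ℝ) (hβ1 : |β| < 1) (hγ : 0 < γ) (x : ℝ) :
    |G2 β γ x₁ x₂ x| ≤ 8 * γ ^ 2 * |Real.sinh (γ * x₁)| * Real.exp (-(γ * |x + x₂|)) := by
  unfold G2
  set s := Real.sinh (γ * (x + x₂)) with hs
  set C := Real.cosh (γ * (x + x₂)) with hC
  set c := Real.cosh (γ * x₁) with hc
  set s₁ := Real.sinh (γ * x₁) with hs₁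
  set E := Real.exp (-(γ * |x + x₂|)) with hE
  have hcpos : 0 < c := by rw [hc]; exact Real.cosh_pos _
  have hc1 : 1 ≤ c := by rw [hc]; exact Real.one_le_cosh _
  have hC1 : 1 ≤ C := by rw [hC]; exact Real.one_le_cosh _
  have hCpos : 0 < C := lt_of_lt_of_le one_pos hC1
  have hEpos : 0 < E := by rw [hE]; exact Real.exp_pos _
  have hsq : C ^ 2 = s ^ 2 + 1 := by rw [hC, hs]; exact Real.cosh_sq _
  set D := c ^ 2 + β ^ 2 * s ^ 2 with hD
  have hDpos : 0 < D := by rw [hD]; positivity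
  have h2 : |β| ^ 2 * C ^ 2 ≤ D := by
    rw [hD, sq_abs]; nlinarith [hsq, hc1, hβ1, abs_nonneg β, sq_abs β]
  have hE1 : 1 ≤ 2 * C * E := by
    have hh : Real.exp (γ * |x + x₂|) ≤ 2 * C := by
      have h := exp_abs_le_two_cosh (γ * (x + x₂))
      rwa [abs_mul, abs_of_pos hγ, ← hC] at h
    have h := mul_le_mul_of_nonneg_right hh hEpos.le
    have h0 : γ * |x + x₂| + -(γ * |x + x₂|) = 0 := by ring
    rwa [hE, ← Real.exp_add, h0, Real.exp_zero] at h
  clear_value s C c s₁ E D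
  have hNeq : -4 * β ^ 2 * γ * (C * γ) * s₁ * D - -4 * β ^ 2 * γ * s * s₁
      * (β ^ 2 * (2 * s * (C * γ))) = (-4 * β ^ 2 * γ ^ 2 * C * s₁)
        * (D - 2 * β ^ 2 * s ^ 2) := by ring
  rw [abs_div, abs_of_pos (by positivity : (0:ℝ) < D ^ 2),
    div_le_iff₀ (by positivity : (0:ℝ) < D ^ 2), hNeq, abs_mul]
  have habs : |(-4 * β ^ 2 * γ ^ 2 * C * s₁)| = 4 * |β| ^ 2 * γ ^ 2 * C * |s₁| := by
    rw [show -4 * β ^ 2 * γ ^ 2 * C * s₁ = (-4) * β ^ 2 * γ ^ 2 * C * s₁ by ring,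
      abs_mul, abs_mul, abs_mul, abs_mul, abs_pow, abs_pow, abs_of_pos hγ, abs_of_pos hCpos]
    norm_num
  rw [habs]
  have habs2 : |D - 2 * β ^ 2 * s ^ 2| ≤ D := by
    rw [hD, abs_le]
    constructor <;> nlinarith [sq_nonneg c, sq_nonneg (β * s)]
  have hq1 : |D - 2 * β ^ 2 * s ^ 2| * (|β| ^ 2 * C ^ 2) ≤ D * D :=
    mul_le_mul habs2 h2 (by positivity) hDpos.le
  have hq2 := mul_le_mul_of_nonneg_left hq1
    (by positivity : (0:ℝ) ≤ 8 * γ ^ 2 * |s₁| * E)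
  have hq3 := mul_le_mul_of_nonneg_left hE1
    (by positivity : (0:ℝ) ≤ 4 * |β| ^ 2 * γ ^ 2 * C * |s₁| * |D - 2 * β ^ 2 * s ^ 2|)
  linarith [hq2, hq3]

/-! ### Continuity -/

lemma D_cont (β γ x₁ x₂ : ℝ) :
    Continuous fun x : ℝ =>
      Real.cosh (γ * x₁) ^ 2 + β ^ 2 * Real.sinh (γ * (x + x₂)) ^ 2 := by
  fun_prop

lemma D_ne (β γ x₁ x₂ : ℝ) (x : ℝ) :
    Real.cosh (γ * x₁) ^ 2 + β ^ 2 * Real.sinh (γ * (x + x₂)) ^ 2 ≠ 0 := by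
  have := Real.cosh_pos (x := γ * x₁)
  positivity

lemma F1_cont (β γ x₁ x₂ : ℝ) : Continuous (fun x => F1 β γ x₁ x₂ x) := by
  unfold F1
  exact ((Continuous.div (by fun_prop) (D_cont β γ x₁ x₂) (D_ne β γ x₁ x₂))).mul
    ((Continuous.div (by fun_prop) (D_cont β γ x₁ x₂) (D_ne β γ x₁ x₂)))

lemma G1_cont (β γ x₁ x₂ : ℝ) : Continuous (fun x => G1 β γ x₁ x₂ x) := by
  unfold G1
  exact Continuous.div (by fun_prop) ((D_cont β γ x₁ x₂).pow 2)
    (fun x => pow_ne_zero 2 (D_ne β γ x₁ x₂ x))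

lemma G2_cont (β γ x₁ x₂ : ℝ) : Continuous (fun x => G2 β γ x₁ x₂ x) := by
  unfold G2
  exact Continuous.div (by fun_prop) ((D_cont β γ x₁ x₂).pow 2)
    (fun x => pow_ne_zero 2 (D_ne β γ x₁ x₂ x))

/-! ### Antisymmetry and zero integrals -/

lemma F1_anti (β γ x₁ x₂ : ℝ) (x : ℝ) :
    F1 β γ x₁ x₂ (-(x + 2 * x₂)) = -F1 β γ x₁ x₂ x := by
  unfold F1
  have h : γ * (-(x + 2 * x₂) + x₂) = -(γ * (x + x₂)) := by ring
  rw [h, Real.sinh_neg, Real.cosh_neg]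
  ring

lemma G12_anti (β γ x₁ x₂ : ℝ) (x : ℝ) :
    G1 β γ x₁ x₂ (-(x + 2 * x₂)) * G2 β γ x₁ x₂ (-(x + 2 * x₂))
      = -(G1 β γ x₁ x₂ x * G2 β γ x₁ x₂ x) := by
  unfold G1 G2
  have h : γ * (-(x + 2 * x₂) + x₂) = -(γ * (x + x₂)) := by ring
  rw [h, Real.sinh_neg, Real.cosh_neg]
  ring

lemma integral_zero_of_antisym (f : ℝ → ℝ) (x₂ : ℝ)
    (hf : ∀ x, f (-(x + 2 * x₂)) = -f x) : ∫ x : ℝ, f x = 0 := by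
  have h1 : (∫ x : ℝ, f (-(x + 2 * x₂))) = ∫ x : ℝ, f (-x) := by
    simpa using integral_add_right_eq_self (fun y : ℝ => f (-y)) (2 * x₂)
  have h2 : (∫ x : ℝ, f (-x)) = ∫ x : ℝ, f x := integral_neg_eq_self f volume
  have h3 : (∫ x : ℝ, f (-(x + 2 * x₂))) = ∫ x : ℝ, -f x := by simp only [hf]
  rw [integral_neg] at h3
  linarith [h1, h2, h3]


/-- **Parity and orthogonality for the 2-kink profile (Appendix B.2).**
For the 2-kink profile `R(x;β,x₁,x₂)` and its time-derivative profile `Rₜ(x;β,x₁,x₂)`: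
(a) when `x₂ = 0`, `x ↦ Rₜ` and `x ↦ ∂_{x₁}Rₜ` are odd while `x ↦ ∂ₓR` and
`x ↦ ∂_{x₂}Rₜ` are even; (b) for all `x₁, x₂`, the products `Rₜ·∂ₓR` and
`∂_{x₁}Rₜ·∂_{x₂}Rₜ` are integrable over `ℝ` with vanishing integrals. -/
theorem two_kink_parity_orthogonality (β : ℝ) (hβ0 : 0 < |β|) (hβ1 : |β| < 1)
    (γ : ℝ) (hγ : γ = (1 - β ^ 2) ^ (-(1 / 2 : ℝ)))
    (R Rt : ℝ → ℝ → ℝ → ℝ)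
    (hR : ∀ x y₁ y₂ : ℝ, R x y₁ y₂
      = 4 * Real.arctan (β * Real.sinh (γ * (x + y₂)) / Real.cosh (γ * y₁)))
    (hRt : ∀ x y₁ y₂ : ℝ, Rt x y₁ y₂
      = -4 * β ^ 2 * γ * Real.sinh (γ * (x + y₂)) * Real.sinh (γ * y₁)
          / ((Real.cosh (γ * y₁)) ^ 2 + β ^ 2 * (Real.sinh (γ * (x + y₂))) ^ 2)) :
    -- (a) parity at x₂ = 0
    (∀ x₁ x : ℝ, Rt (-x) x₁ 0 = -Rt x x₁ 0) ∧
    (∀ x₁ x : ℝ, deriv (fun y₁ => Rt (-x) y₁ 0) x₁ = -deriv (fun y₁ => Rt x y₁ 0) x₁) ∧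
    (∀ x₁ x : ℝ, deriv (fun y => R y x₁ 0) (-x) = deriv (fun y => R y x₁ 0) x) ∧
    (∀ x₁ x : ℝ, deriv (fun y₂ => Rt (-x) x₁ y₂) 0 = deriv (fun y₂ => Rt x x₁ y₂) 0) ∧
    -- (b) orthogonality for all shifts
    (∀ x₁ x₂ : ℝ,
      Integrable (fun x : ℝ => Rt x x₁ x₂ * deriv (fun y => R y x₁ x₂) x) ∧
      Integrable (fun x : ℝ =>
        deriv (fun y₁ => Rt x y₁ x₂) x₁ * deriv (fun y₂ => Rt x x₁ y₂) x₂) ∧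
      (∫ x : ℝ, Rt x x₁ x₂ * deriv (fun y => R y x₁ x₂) x) = 0 ∧
      (∫ x : ℝ, deriv (fun y₁ => Rt x y₁ x₂) x₁ * deriv (fun y₂ => Rt x x₁ y₂) x₂) = 0) := by
  have h1b : 0 < 1 - β ^ 2 := by nlinarith [sq_abs β, abs_nonneg β]
  have hγpos : 0 < γ := by rw [hγ]; positivity
  refine ⟨?_, ?_, ?_, ?_, ?_⟩
  · -- Rt is odd in x at x₂ = 0
    intro x₁ x
    rw [hRt, hRt]
    have h : γ * (-x + 0) = -(γ * (x + 0)) := by ring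
    rw [h, Real.sinh_neg]
    ring
  · -- ∂₁Rt is odd in x at x₂ = 0
    intro x₁ x
    simp only [hRt]
    rw [(aux_d1 (-4 * β ^ 2 * γ * Real.sinh (γ * (-x + 0)))
          (β ^ 2 * Real.sinh (γ * (-x + 0)) ^ 2) γ (by positivity) x₁).deriv,
        (aux_d1 (-4 * β ^ 2 * γ * Real.sinh (γ * (x + 0)))
          (β ^ 2 * Real.sinh (γ * (x + 0)) ^ 2) γ (by positivity) x₁).deriv]
    have h : γ * (-x + 0) = -(γ * (x + 0)) := by ring
    rw [h, Real.sinh_neg]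
    ring
  · -- ∂ₓR is even in x at x₂ = 0
    intro x₁ x
    simp only [hR]
    rw [(aux_dR β γ (Real.cosh (γ * x₁)) 0 (Real.cosh_pos _) (-x)).deriv,
        (aux_dR β γ (Real.cosh (γ * x₁)) 0 (Real.cosh_pos _) x).deriv]
    have h : γ * (-x + 0) = -(γ * (x + 0)) := by ring
    rw [h, Real.sinh_neg, Real.cosh_neg]
    ring
  · -- ∂₂Rt is even in x at x₂ = 0
    intro x₁ x
    simp only [hRt]
    rw [(aux_d2 (-4 * β ^ 2 * γ) (Real.sinh (γ * x₁)) (Real.cosh (γ * x₁) ^ 2) (β ^ 2) γ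
          (-x) (pow_pos (Real.cosh_pos _) 2) (by positivity) 0).deriv,
        (aux_d2 (-4 * β ^ 2 * γ) (Real.sinh (γ * x₁)) (Real.cosh (γ * x₁) ^ 2) (β ^ 2) γ
          x (pow_pos (Real.cosh_pos _) 2) (by positivity) 0).deriv]
    have h : γ * (-x + 0) = -(γ * (x + 0)) := by ring
    rw [h, Real.sinh_neg, Real.cosh_neg]
    ring
  · -- orthogonality
    intro x₁ x₂
    have key1 : ∀ x : ℝ, Rt x x₁ x₂ * deriv (fun y => R y x₁ x₂) x = F1 β γ x₁ x₂ x := by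
      intro x
      simp only [hRt, hR]
      rw [(aux_dR β γ (Real.cosh (γ * x₁)) x₂ (Real.cosh_pos _) x).deriv]
      rfl
    have key2 : ∀ x : ℝ, deriv (fun y₁ => Rt x y₁ x₂) x₁ = G1 β γ x₁ x₂ x := by
      intro x
      simp only [hRt]
      rw [(aux_d1 (-4 * β ^ 2 * γ * Real.sinh (γ * (x + x₂)))
            (β ^ 2 * Real.sinh (γ * (x + x₂)) ^ 2) γ (by positivity) x₁).deriv]
      rfl
    have key3 : ∀ x : ℝ, deriv (fun y₂ => Rt x x₁ y₂) x₂ = G2 β γ x₁ x₂ x := by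
      intro x
      simp only [hRt]
      rw [(aux_d2 (-4 * β ^ 2 * γ) (Real.sinh (γ * x₁)) (Real.cosh (γ * x₁) ^ 2) (β ^ 2) γ
            x (pow_pos (Real.cosh_pos _) 2) (by positivity) x₂).deriv]
      rfl
    have hgint : Integrable (fun x : ℝ => Real.exp (-(γ * |x + x₂|))) :=
      (integrable_exp_neg_mul_abs γ hγpos).comp_add_right x₂
    refine ⟨?_, ?_, ?_, ?_⟩
    · simp only [key1]
      refine Integrable.mono' (hgint.const_mul (16 * γ ^ 2 * |Real.sinh (γ * x₁)|))
        (F1_cont β γ x₁ x₂).aestronglyMeasurable ?_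
      exact Filter.Eventually.of_forall fun x => by
        rw [Real.norm_eq_abs]; exact F1_bound β γ x₁ x₂ hβ1 hγpos x
    · simp only [key2, key3]
      refine Integrable.mono'
        (hgint.const_mul ((2 * |β| * γ ^ 2 * (1 + 2 * Real.sinh (γ * x₁) ^ 2))
          * (8 * γ ^ 2 * |Real.sinh (γ * x₁)|)))
        ((G1_cont β γ x₁ x₂).mul (G2_cont β γ x₁ x₂)).aestronglyMeasurable ?_
      refine Filter.Eventually.of_forall fun x => ?_
      rw [Real.norm_eq_abs, abs_mul]
      have h1 := G1_bound β γ x₁ x₂ hβ1 hγpos x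
      have h2 := G2_bound β γ x₁ x₂ hβ1 hγpos x
      have := mul_le_mul h1 h2 (abs_nonneg _) (by positivity)
      calc |G1 β γ x₁ x₂ x| * |G2 β γ x₁ x₂ x|
          ≤ (2 * |β| * γ ^ 2 * (1 + 2 * Real.sinh (γ * x₁) ^ 2))
            * (8 * γ ^ 2 * |Real.sinh (γ * x₁)| * Real.exp (-(γ * |x + x₂|))) := this
        _ = (2 * |β| * γ ^ 2 * (1 + 2 * Real.sinh (γ * x₁) ^ 2))
            * (8 * γ ^ 2 * |Real.sinh (γ * x₁)|) * Real.exp (-(γ * |x + x₂|)) := by ring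
    · simp only [key1]
      exact integral_zero_of_antisym _ x₂ (F1_anti β γ x₁ x₂)
    · simp only [key2, key3]
      exact integral_zero_of_antisym _ x₂ (G12_anti β γ x₁ x₂)
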